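/- (Weight transformation under the ±3 → ±1 injection.) Let D=(V,E) be a finite graph with edge weights c_e ≥ 1, x ∈ V with neighbourhood N_x, and let χ: V∖{x} → 2ℤ+1 be a fixed positive configuration with χ(y) ∈ {1,3} for all y ∈ N_x. For a height function h with h|_{V∖{x}} of absolute value χ and |h(x)| = 3, let T(h) be the function obtained by replacing h(x) = ±3 with ±1 (same sign). Then T(h) is again a height function, and W(T(h)) = (∏_{y∈N_x: χ(y)=1} c_{⟨x,y⟩} / ∏_{y∈N_x: χ(y)=3} c_{⟨x,y⟩}) · W(h), where W(h) = ∏_{e=⟨v,w⟩∈E} c_e^{𝟙{h(v)=h(w)}}. -/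

import Mathlib

/-- A height function: odd-valued and changing by at most 2 along edges. -/
def IsHeight {V : Type*} (G : SimpleGraph V) (h : V → ℤ) : Prop :=
  (∀ v, Odd (h v)) ∧ ∀ v w, G.Adj v w → |h v - h w| ≤ 2

/-- The weight of a height function: a factor `c e` for each edge on which `h` is constant. -/
def heightWeight {V : Type*} [Fintype V] [DecidableEq V] (G : SimpleGraph V)
    [DecidableRel G.Adj] (c : Sym2 V → ℝ) (h : V → ℤ) : ℝ :=
  ∏ e ∈ G.edgeFinset, if ∀ v ∈ e, ∀ w ∈ e, h v = h w then c e else 1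

lemma cond_pair {V : Type*} (h : V → ℤ) (a b : V) :
    (∀ v ∈ s(a,b), ∀ w ∈ s(a,b), h v = h w) ↔ h a = h b := by
  constructor
  · intro H; exact H a (by simp) b (by simp)
  · rintro hab v hv w hw
    rw [Sym2.mem_iff] at hv hw
    rcases hv with rfl | rfl <;> rcases hw with rfl | rfl <;> omega

theorem stmt_17 {V : Type*} [Fintype V] [DecidableEq V] (G : SimpleGraph V)
    [DecidableRel G.Adj] (c : Sym2 V → ℝ) (hc : ∀ e ∈ G.edgeSet, 1 ≤ c e)
    (x : V) (χ : V → ℤ) (hχ : ∀ y ∈ G.neighborFinset x, χ y = 1 ∨ χ y = 3)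
    (h : V → ℤ) (hh : IsHeight G h)
    (habs : ∀ y : V, y ≠ x → |h y| = χ y) (hx3 : |h x| = 3) :
    IsHeight G (Function.update h x (if 0 < h x then 1 else -1)) ∧
    heightWeight G c (Function.update h x (if 0 < h x then 1 else -1)) =
      ((∏ y ∈ (G.neighborFinset x).filter fun y => χ y = 1, c s(x, y)) /
          ∏ y ∈ (G.neighborFinset x).filter fun y => χ y = 3, c s(x, y)) *
        heightWeight G c h := by
  set s : ℤ := if 0 < h x then 1 else -1 with hs
  set h' : V → ℤ := Function.update h x s with hh'
  have h'x : h' x = s := Function.update_self x s h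
  have h'ne : ∀ y, y ≠ x → h' y = h y := fun y hy => Function.update_of_ne hy s h
  have hx : h x = 3 ∨ h x = -3 := (abs_eq (by norm_num)).mp hx3
  have key : ∀ y, G.Adj x y →
      ((h x = h y ↔ χ y = 3) ∧ (s = h y ↔ χ y = 1) ∧ (-2 ≤ s - h y ∧ s - h y ≤ 2)) := by
    intro y hadj
    have h1 := habs y hadj.ne'
    have h2 := hχ y (by simpa using hadj)
    have h3 := abs_le.mp (hh.2 x y hadj)
    have h5 : h y = χ y ∨ h y = -χ y := (abs_eq (by omega)).mp h1
    rcases hx with h4 | h4 <;> simp only [hs, h4] <;> norm_num <;> omega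
  refine ⟨⟨?_, ?_⟩, ?_⟩
  · intro v
    rcases eq_or_ne v x with rfl | hv
    · rw [h'x, hs]; split
      · exact ⟨0, by ring⟩
      · exact ⟨-1, by ring⟩
    · rw [h'ne v hv]; exact hh.1 v
  · intro v w hadj
    rcases eq_or_ne x v with rfl | hv
    · rcases eq_or_ne x w with rfl | hw
      · exact absurd hadj (G.loopless.irrefl x)
      · rw [h'x, h'ne w hw.symm, abs_le]
        exact (key w hadj).2.2
    · rcases eq_or_ne x w with rfl | hw
      · rw [h'x, h'ne v hv.symm, abs_le]
        have := (key v hadj.symm).2.2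
        omega
      · rw [h'ne v hv.symm, h'ne w hw.symm]
        exact hh.2 v w hadj
  · -- weight identity
    have himg : G.edgeFinset.filter (fun e => x ∈ e)
        = (G.neighborFinset x).image (fun y => s(x,y)) := by
      ext e
      induction e with
      | h a b =>
        simp only [Finset.mem_filter, SimpleGraph.mem_edgeFinset, SimpleGraph.mem_edgeSet,
          Sym2.mem_iff, Finset.mem_image, SimpleGraph.mem_neighborFinset, Sym2.eq_iff]
        constructor
        · rintro ⟨hab, rfl | rfl⟩
          · exact ⟨b, hab, Or.inl ⟨rfl, rfl⟩⟩
          · exact ⟨a, hab.symm, Or.inr ⟨rfl, rfl⟩⟩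
        · rintro ⟨y, hy, ⟨rfl, rfl⟩ | ⟨rfl, rfl⟩⟩
          · exact ⟨hy, Or.inl rfl⟩
          · exact ⟨hy.symm, Or.inr rfl⟩
    have hinj : Set.InjOn (fun y => s(x,y)) (G.neighborFinset x) := by
      intro a ha b hb hab
      simp only [Sym2.eq_iff] at hab
      rcases hab with ⟨-, rfl⟩ | ⟨h1, h2⟩
      · rfl
      · exfalso
        exact (G.ne_of_adj (by simpa using ha)).symm h2
    have split : ∀ g : V → ℤ, heightWeight G c g =
        (∏ y ∈ G.neighborFinset x,
          if ∀ v ∈ s(x,y), ∀ w ∈ s(x,y), g v = g w then c s(x,y) else 1) *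
        ∏ e ∈ G.edgeFinset.filter (fun e => ¬ x ∈ e),
          (if ∀ v ∈ e, ∀ w ∈ e, g v = g w then c e else 1) := by
      intro g
      rw [heightWeight, ← Finset.prod_filter_mul_prod_filter_not G.edgeFinset (fun e => x ∈ e),
        himg, Finset.prod_image hinj]
    have hB : ∀ e ∈ G.edgeFinset.filter (fun e => ¬ x ∈ e),
        (if ∀ v ∈ e, ∀ w ∈ e, h' v = h' w then c e else 1)
          = (if ∀ v ∈ e, ∀ w ∈ e, h v = h w then c e else 1) := by
      intro e he
      have hxe : x ∉ e := (Finset.mem_filter.mp he).2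
      have hv : ∀ v ∈ e, h' v = h v := fun v hvm =>
        h'ne v (fun hvx => hxe (hvx ▸ hvm))
      refine if_congr ⟨fun H v hvm w hwm => ?_, fun H v hvm w hwm => ?_⟩ rfl rfl
      · rw [← hv v hvm, ← hv w hwm]; exact H v hvm w hwm
      · rw [hv v hvm, hv w hwm]; exact H v hvm w hwm
    have hA' : (∏ y ∈ G.neighborFinset x,
          if ∀ v ∈ s(x,y), ∀ w ∈ s(x,y), h' v = h' w then c s(x,y) else 1)
        = ∏ y ∈ (G.neighborFinset x).filter (fun y => χ y = 1), c s(x,y) := by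
      rw [Finset.prod_filter]
      refine Finset.prod_congr rfl fun y hy => ?_
      have hadj : G.Adj x y := by simpa using hy
      exact if_congr ((cond_pair h' x y).trans
        (by rw [h'x, h'ne y hadj.ne']; exact (key y hadj).2.1)) rfl rfl
    have hA : (∏ y ∈ G.neighborFinset x,
          if ∀ v ∈ s(x,y), ∀ w ∈ s(x,y), h v = h w then c s(x,y) else 1)
        = ∏ y ∈ (G.neighborFinset x).filter (fun y => χ y = 3), c s(x,y) := by
      rw [Finset.prod_filter]
      refine Finset.prod_congr rfl fun y hy => ?_
      have hadj : G.Adj x y := by simpa using hy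
      exact if_congr ((cond_pair h x y).trans (key y hadj).1) rfl rfl
    have hP3 : (0:ℝ) < ∏ y ∈ (G.neighborFinset x).filter (fun y => χ y = 3), c s(x,y) := by
      refine Finset.prod_pos fun y hy => ?_
      have hadj : G.Adj x y := by simpa using (Finset.mem_filter.mp hy).1
      exact lt_of_lt_of_le one_pos (hc _ (G.mem_edgeSet.mpr hadj))
    rw [split h', split h, Finset.prod_congr rfl hB, hA', hA]
    field_simp
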